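/- arXiv:1004.2182 — 2 statements merged into one kernel-verified Lean document; each statement's English description precedes it below -/
import Mathlib

section
/- Let S_n = S_0 + Σ_{j=1}^n C_j be a renewal process with i.i.d. interarrival times C_j having mean μ = E[C_1] > 0 and E[C_1^p] < ∞ for some p ∈ (1,2), and let M_T be the number of renewals in (0,T]. Then there exists a constant c such that P(M_T > 2T/μ) ≤ c T^{1−p} for all T > 0. -/
open MeasureTheory ProbabilityTheory Filter Set

noncomputable section

variable {Ω : Type*} [MeasureSpace Ω]

/-- The renewal epochs `S_n = S_0 + Σ_{j=1}^n C_j`. -/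
def renewalEpoch (S0 : Ω → ℝ) (C : ℕ → Ω → ℝ) (n : ℕ) (ω : Ω) : ℝ :=
  S0 ω + ∑ j ∈ Finset.Icc 1 n, C j ω

/-- The number `M_T` of renewals in `(0, T]`. -/
def renewalCount (S0 : Ω → ℝ) (C : ℕ → Ω → ℝ) (T : ℝ) (ω : Ω) : ℕ :=
  {n : ℕ | 1 ≤ n ∧ renewalEpoch S0 C n ω ≤ T}.ncard

/-- pointwise bound `exp (-x) ≤ 1 - x + x ^ p` for `0 ≤ x`, `1 < p < 2`. -/
lemma aux_exp_le_one_sub_add (p x : ℝ) (hp1 : 1 < p) (hp2 : p < 2) (hx : 0 ≤ x) :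
    Real.exp (-x) ≤ 1 - x + x ^ p := by
  rcases le_or_gt x 1 with h | h
  · -- x ≤ 1 : exp (-x) ≤ 1/(1+x) ≤ 1 - x + x^2 ≤ 1 - x + x^p
    have h2p : x ^ (2:ℝ) ≤ x ^ p := by
      rcases eq_or_lt_of_le hx with h0 | h0
      · rw [← h0, Real.zero_rpow (by norm_num), Real.zero_rpow (by linarith)]
      · exact Real.rpow_le_rpow_of_exponent_ge h0 h hp2.le
    have h2 : x ^ (2:ℝ) = x * x := by
      rw [show (2:ℝ) = ((2:ℕ):ℝ) by norm_num, Real.rpow_natCast]; ring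
    have h1x : (0:ℝ) < 1 + x := by linarith
    have hexp : Real.exp (-x) ≤ (1 + x)⁻¹ := by
      rw [Real.exp_neg]
      exact inv_anti₀ h1x (Real.add_one_le_exp x |>.trans_eq' (by ring))
    have hinv : (1 + x)⁻¹ ≤ 1 - x + x * x := by
      rw [inv_le_iff_one_le_mul₀ h1x]
      nlinarith
    rw [← h2] at hinv
    linarith
  · -- 1 < x : exp (-x) ≤ 1 and x ≤ x^p
    have h1 : Real.exp (-x) ≤ 1 := Real.exp_le_one_iff.mpr (by linarith)
    have h2 : x ≤ x ^ p := by
      calc x = x ^ (1:ℝ) := (Real.rpow_one x).symm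
        _ ≤ x ^ p := Real.rpow_le_rpow_of_exponent_le h.le hp1.le
    linarith

/-- `x ^ s ≤ exp x` for `x > 0`, `0 ≤ s ≤ 1`. -/
lemma aux_rpow_le_exp {x s : ℝ} (hx : 0 < x) (hs : 0 ≤ s) (hs1 : s ≤ 1) :
    x ^ s ≤ Real.exp x := by
  rcases le_or_gt x 1 with h | h
  · calc x ^ s ≤ 1 := Real.rpow_le_one hx.le h hs
      _ ≤ Real.exp x := by
        rw [Real.one_le_exp_iff]; exact hx.le
  · calc x ^ s ≤ x ^ (1:ℝ) := Real.rpow_le_rpow_of_exponent_le h.le hs1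
      _ = x := Real.rpow_one x
      _ ≤ Real.exp x := by linarith [Real.add_one_le_exp x]

/-- integrability of `exp (-a * f)` for nonnegative measurable `f` and `a ≥ 0`. -/
lemma aux_integrable_exp_neg [IsProbabilityMeasure (ℙ : Measure Ω)]
    {f : Ω → ℝ} (hf : Measurable f) (hf0 : ∀ ω, 0 ≤ f ω) {a : ℝ} (ha : 0 ≤ a) :
    Integrable (fun ω => Real.exp (-a * f ω)) ℙ := by
  refine (integrable_const 1).mono' ((hf.const_mul (-a)).exp.aestronglyMeasurable)
    (ae_of_all _ fun ω => ?_)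
  rw [Real.norm_eq_abs, abs_of_pos (Real.exp_pos _)]
  calc Real.exp (-a * f ω) ≤ Real.exp 0 :=
        Real.exp_le_exp.mpr (by nlinarith [hf0 ω])
    _ = 1 := Real.exp_zero

/-- For a renewal process with i.i.d. interarrival times `C_j ≥ 0` with
mean `μ > 0` and `E[C_1^p] < ∞` for some `p ∈ (1,2)`, there is a constant `c` such that
`P(M_T > 2T/μ) ≤ c T^{1−p}` for all `T > 0`. -/
theorem renewal_count_deviation
    [IsProbabilityMeasure (ℙ : Measure Ω)]
    (S0 : Ω → ℝ) (C : ℕ → Ω → ℝ) (p μ : ℝ)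
    (hp : 1 < p ∧ p < 2)
    (hmeasS0 : Measurable S0) (hS0 : ∀ ω, 0 ≤ S0 ω)
    (hmeasC : ∀ j, Measurable (C j))
    (hCpos : ∀ j ω, 0 ≤ C j ω)
    (hiid : iIndepFun C ℙ)
    (hident : ∀ j, 1 ≤ j → IdentDistrib (C j) (C 1) ℙ ℙ)
    (hmean : ∫ ω, C 1 ω ∂ℙ = μ) (hμ : 0 < μ)
    (hCp : Integrable (fun ω => C 1 ω ^ p) ℙ) :
    ∃ c : ℝ, 0 < c ∧ ∀ T : ℝ, 0 < T →
      (ℙ {ω | 2 * T / μ < (renewalCount S0 C T ω : ℝ)}).toReal ≤ c * T ^ (1 - p) := by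
  obtain ⟨hp1, hp2⟩ := hp
  have hp1' : (0:ℝ) < p - 1 := by linarith
  set K := ∫ ω, C 1 ω ^ p ∂ℙ with hKdef
  have hK0 : 0 ≤ K := integral_nonneg fun ω => Real.rpow_nonneg (hCpos 1 ω) p
  -- integrability of C 1
  have hC1int : Integrable (C 1) ℙ := by
    refine ((integrable_const 1).add hCp).mono' ((hmeasC 1).aestronglyMeasurable)
      (ae_of_all _ fun ω => ?_)
    rw [Real.norm_eq_abs, abs_of_nonneg (hCpos 1 ω)]
    rcases le_or_gt (C 1 ω) 1 with h | h
    · have := Real.rpow_nonneg (hCpos 1 ω) p; simp only [Pi.add_apply]; linarith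
    · have h2 : C 1 ω ≤ C 1 ω ^ p := by
        calc C 1 ω = C 1 ω ^ (1:ℝ) := (Real.rpow_one _).symm
          _ ≤ C 1 ω ^ p := Real.rpow_le_rpow_of_exponent_le h.le hp1.le
      simp only [Pi.add_apply]; linarith
  -- choose the parameter a
  set a : ℝ := min 1 ((μ / (4 * (K + 1))) ^ (1 / (p - 1))) with hadef
  have hbpos : (0:ℝ) < μ / (4 * (K + 1)) := by positivity
  have ha0 : 0 < a := lt_min one_pos (Real.rpow_pos_of_pos hbpos _)
  have hak : a ^ (p - 1) * K ≤ μ / 4 := by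
    have h1 : a ^ (p - 1) ≤ ((μ / (4 * (K + 1))) ^ (1 / (p - 1))) ^ (p - 1) :=
      Real.rpow_le_rpow ha0.le (min_le_right _ _) hp1'.le
    rw [← Real.rpow_mul hbpos.le, one_div, inv_mul_cancel₀ hp1'.ne', Real.rpow_one] at h1
    calc a ^ (p - 1) * K ≤ (μ / (4 * (K + 1))) * K :=
          mul_le_mul_of_nonneg_right h1 hK0
      _ ≤ μ / 4 := by
          rw [div_mul_eq_mul_div, div_le_div_iff₀ (by positivity) (by norm_num)]
          nlinarith
  have hap : a ^ p = a * a ^ (p - 1) := by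
    have h := Real.rpow_add ha0 1 (p - 1)
    rw [show (1:ℝ) + (p - 1) = p by ring, Real.rpow_one] at h
    exact h
  -- the mgf bound for C 1
  have hmgf1 : mgf (C 1) ℙ (-a) ≤ Real.exp (-(3/4) * (a * μ)) := by
    have hbound : ∀ ω, Real.exp (-a * C 1 ω) ≤ 1 - a * C 1 ω + a ^ p * C 1 ω ^ p := by
      intro ω
      have h := aux_exp_le_one_sub_add p (a * C 1 ω) hp1 hp2
        (mul_nonneg ha0.le (hCpos 1 ω))
      rwa [Real.mul_rpow ha0.le (hCpos 1 ω), ← neg_mul] at h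
    have hint : Integrable (fun ω => 1 - a * C 1 ω + a ^ p * C 1 ω ^ p) ℙ :=
      ((integrable_const 1).sub (hC1int.const_mul a)).add (hCp.const_mul _)
    have h1 : mgf (C 1) ℙ (-a) ≤ ∫ ω, (1 - a * C 1 ω + a ^ p * C 1 ω ^ p) ∂ℙ := by
      refine integral_mono (aux_integrable_exp_neg (hmeasC 1) (hCpos 1) ha0.le) hint hbound
    have hi1 : Integrable (fun ω => 1 - a * C 1 ω) ℙ := by
      exact (integrable_const 1).sub (hC1int.const_mul a)
    have h2 : ∫ ω, (1 - a * C 1 ω + a ^ p * C 1 ω ^ p) ∂ℙ = 1 - a * μ + a ^ p * K := by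
      rw [integral_add hi1 (hCp.const_mul _),
        integral_sub (integrable_const 1) (hC1int.const_mul a), integral_const,
        integral_const_mul, integral_const_mul, hmean]
      simp [hKdef]
    have h3 : 1 - a * μ + a ^ p * K ≤ Real.exp (-(a * μ) + a ^ p * K) := by
      have := Real.add_one_le_exp (-(a * μ) + a ^ p * K)
      linarith
    have h4 : -(a * μ) + a ^ p * K ≤ -(3/4) * (a * μ) := by
      rw [hap, mul_assoc]
      have h5 : a * (a ^ (p - 1) * K) ≤ a * (μ / 4) :=
        mul_le_mul_of_nonneg_left hak ha0.le
      nlinarith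
    calc mgf (C 1) ℙ (-a) ≤ 1 - a * μ + a ^ p * K := h2 ▸ h1
      _ ≤ Real.exp (-(a * μ) + a ^ p * K) := h3
      _ ≤ Real.exp (-(3/4) * (a * μ)) := Real.exp_le_exp.mpr h4
  -- the constant
  refine ⟨(a / 2) ^ (1 - p), Real.rpow_pos_of_pos (by positivity) _, fun T hT => ?_⟩
  set m : ℕ := Nat.floor (2 * T / μ) + 1 with hmdef
  have hm1 : 2 * T / μ < (m : ℝ) := by
    rw [hmdef]; push_cast
    exact Nat.lt_floor_add_one _
  -- event inclusion
  have hsub : {ω | 2 * T / μ < (renewalCount S0 C T ω : ℝ)} ⊆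
      {ω | (∑ j ∈ Finset.Icc 1 m, C j) ω ≤ T} := by
    intro ω hω
    simp only [mem_setOf_eq, Finset.sum_apply] at hω ⊢
    set F := {n : ℕ | 1 ≤ n ∧ renewalEpoch S0 C n ω ≤ T} with hFdef
    have h0 : 0 ≤ 2 * T / μ := by positivity
    have hω' : 2 * T / μ < (F.ncard : ℝ) := hω
    have hcard : m ≤ F.ncard := by
      have := (Nat.floor_lt h0).mpr hω'
      omega
    have hFfin : F.Finite := by
      by_contra h
      rw [Set.Infinite.ncard h] at hcard
      omega
    have hN : ∃ N ∈ F, m ≤ N := by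
      by_contra h
      push_neg at h
      have hsub2 : F ⊆ ↑(Finset.Ico 1 m) := fun n hn => by
        simp only [Finset.coe_Ico, mem_Ico]
        exact ⟨hn.1, h n hn⟩
      have hle := Set.ncard_le_ncard hsub2 (Finset.Ico 1 m).finite_toSet
      rw [Set.ncard_coe_finset, Nat.card_Ico] at hle
      omega
    obtain ⟨N, hNF, hmN⟩ := hN
    have h1 : ∑ j ∈ Finset.Icc 1 m, C j ω ≤ ∑ j ∈ Finset.Icc 1 N, C j ω :=
      Finset.sum_le_sum_of_subset_of_nonneg (Finset.Icc_subset_Icc_right hmN)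
        (fun i _ _ => hCpos i ω)
    have h2 : S0 ω + ∑ j ∈ Finset.Icc 1 N, C j ω ≤ T := hNF.2
    linarith [hS0 ω]
  -- Chernoff
  have hYmeas : Measurable (∑ j ∈ Finset.Icc 1 m, C j) := by
    have h := Finset.measurable_sum (Finset.Icc 1 m) (fun j _ => hmeasC j)
    have he : (∑ j ∈ Finset.Icc 1 m, C j) = fun ω => ∑ j ∈ Finset.Icc 1 m, C j ω :=
      funext fun ω => Finset.sum_apply ω _ _
    rw [he]; exact h
  have hY0 : ∀ ω, 0 ≤ (∑ j ∈ Finset.Icc 1 m, C j) ω := fun ω => by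
    rw [Finset.sum_apply]
    exact Finset.sum_nonneg fun j _ => hCpos j ω
  have hint : Integrable (fun ω => Real.exp (-a * (∑ j ∈ Finset.Icc 1 m, C j) ω)) ℙ :=
    aux_integrable_exp_neg hYmeas hY0 ha0.le
  have hchern := measure_le_le_exp_mul_mgf (μ := ℙ) (X := ∑ j ∈ Finset.Icc 1 m, C j) T
    (t := -a) (by linarith) hint
  rw [hiid.mgf_sum hmeasC] at hchern
  -- bound the product
  have hprod : ∏ j ∈ Finset.Icc 1 m, mgf (C j) ℙ (-a) ≤
      Real.exp (-(3/4) * (a * μ)) ^ m := by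
    have h1 : ∏ j ∈ Finset.Icc 1 m, mgf (C j) ℙ (-a) ≤
        ∏ _j ∈ Finset.Icc 1 m, Real.exp (-(3/4) * (a * μ)) := by
      refine Finset.prod_le_prod (fun j _ => mgf_nonneg) (fun j hj => ?_)
      have hj1 : 1 ≤ j := (Finset.mem_Icc.mp hj).1
      have hgm : Measurable (fun x : ℝ => Real.exp (-a * x)) :=
        (measurable_id.const_mul (-a)).exp
      have heq : mgf (C j) ℙ (-a) = mgf (C 1) ℙ (-a) := by
        have h := ((hident j hj1).comp hgm).integral_eq
        simpa [mgf, Function.comp] using h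
      rw [heq]; exact hmgf1
    rwa [Finset.prod_const, Nat.card_Icc, Nat.add_sub_cancel] at h1
  have hstep : (ℙ {ω | (∑ j ∈ Finset.Icc 1 m, C j) ω ≤ T}).toReal ≤
      Real.exp (-a * T / 2) := by
    calc (ℙ {ω | (∑ j ∈ Finset.Icc 1 m, C j) ω ≤ T}).toReal
        ≤ Real.exp (-(-a) * T) * ∏ j ∈ Finset.Icc 1 m, mgf (C j) ℙ (-a) := hchern
      _ ≤ Real.exp (a * T) * Real.exp (-(3/4) * (a * μ)) ^ m := by
          rw [neg_neg]
          exact mul_le_mul_of_nonneg_left hprod (Real.exp_pos _).le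
      _ = Real.exp (a * T + (m : ℝ) * (-(3/4) * (a * μ))) := by
          rw [← Real.exp_nat_mul, ← Real.exp_add]
      _ ≤ Real.exp (-a * T / 2) := by
          apply Real.exp_le_exp.mpr
          have h2T : 2 * T ≤ μ * m := by
            rw [div_lt_iff₀ hμ] at hm1
            nlinarith
          nlinarith [mul_le_mul_of_nonneg_left h2T ha0.le]
  -- final: exp (-a*T/2) ≤ (a/2)^(1-p) * T^(1-p)
  have hfin : Real.exp (-a * T / 2) ≤ (a / 2) ^ (1 - p) * T ^ (1 - p) := by
    set x := a / 2 * T with hxdef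
    have hx : 0 < x := by positivity
    have h5 : x ^ (p - 1) ≤ Real.exp x := aux_rpow_le_exp hx hp1'.le (by linarith)
    have h6 : x ^ (p - 1) = (a / 2) ^ (p - 1) * T ^ (p - 1) :=
      Real.mul_rpow (by positivity) hT.le
    have hprodpos : 0 < (a / 2) ^ (p - 1) * T ^ (p - 1) :=
      mul_pos (Real.rpow_pos_of_pos (by positivity) _) (Real.rpow_pos_of_pos hT _)
    have h7 : Real.exp (-a * T / 2) = (Real.exp x)⁻¹ := by
      rw [← Real.exp_neg]; congr 1; rw [hxdef]; ring
    have h8 : (Real.exp x)⁻¹ ≤ ((a / 2) ^ (p - 1) * T ^ (p - 1))⁻¹ := by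
      apply inv_anti₀ hprodpos
      rw [← h6]; exact h5
    have h9 : ((a / 2) ^ (p - 1) * T ^ (p - 1))⁻¹ = (a / 2) ^ (1 - p) * T ^ (1 - p) := by
      rw [mul_inv, ← Real.rpow_neg (by positivity : (0:ℝ) ≤ a / 2),
        ← Real.rpow_neg hT.le, show -(p - 1) = 1 - p by ring]
    rw [h7, ← h9]; exact h8
  calc (ℙ {ω | 2 * T / μ < (renewalCount S0 C T ω : ℝ)}).toReal
      ≤ (ℙ {ω | (∑ j ∈ Finset.Icc 1 m, C j) ω ≤ T}).toReal :=
        ENNReal.toReal_mono (measure_ne_top _ _) (measure_mono hsub)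
    _ ≤ Real.exp (-a * T / 2) := hstep
    _ ≤ (a / 2) ^ (1 - p) * T ^ (1 - p) := hfin
end
end

section
/- For real-valued càdlàg functions x_1, x_2 on [a,c] and a < b < c, the Skorohod M_1 distance satisfies d_{M_1}(x_1, x_2, [a,c]) ≤ max( d_{M_1}(x_1, x_2, [a,b]), d_{M_1}(x_1, x_2, [b,c]) ). -/
open Filter Set Function

noncomputable section

/-- The left-limit value of `x` used at time `t` of the interval `[a,b]` (at the left
endpoint `a` no jump is recorded). -/
def m1Left (x : ℝ → ℝ) (a t : ℝ) : ℝ := if t = a then x a else leftLim x t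

/-- The completed graph of `x` over `[a,b]`: the graph together with the vertical
segments joining `x(t−)` to `x(t)` at jump times. -/
def completedGraph (x : ℝ → ℝ) (a b : ℝ) : Set (ℝ × ℝ) :=
  {p : ℝ × ℝ | p.1 ∈ Set.Icc a b ∧ p.2 ∈ Set.uIcc (m1Left x a p.1) (x p.1)}

/-- The order on the completed graph used to define parametric representations:
points are compared first by time, and at a common time by how far along the jump
segment (starting from the left limit) they lie. -/
def graphLE (x : ℝ → ℝ) (a : ℝ) (p q : ℝ × ℝ) : Prop :=
  p.1 < q.1 ∨ (p.1 = q.1 ∧ |p.2 - m1Left x a p.1| ≤ |q.2 - m1Left x a q.1|)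

/-- A parametric representation of the completed graph of `x` on `[a,b]`: a continuous
nondecreasing (for the graph order) map from `[0,1]` onto the completed graph. -/
def IsParamRep (x : ℝ → ℝ) (a b : ℝ) (u : ℝ → ℝ × ℝ) : Prop :=
  ContinuousOn u (Set.Icc 0 1) ∧ u '' Set.Icc 0 1 = completedGraph x a b ∧
    ∀ s t : ℝ, s ∈ Set.Icc (0:ℝ) 1 → t ∈ Set.Icc (0:ℝ) 1 → s ≤ t →
      graphLE x a (u s) (u t)

/-- The Skorohod `M_1` distance between `x₁` and `x₂` on the interval `[a,b]`, defined
as the infimum over parametric representations of the uniform distance between them. -/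
def m1Dist (x₁ x₂ : ℝ → ℝ) (a b : ℝ) : ℝ :=
  sInf {r : ℝ | ∃ u₁ u₂ : ℝ → ℝ × ℝ, IsParamRep x₁ a b u₁ ∧ IsParamRep x₂ a b u₂ ∧
    ∀ t ∈ Set.Icc (0:ℝ) 1,
      max |(u₁ t).1 - (u₂ t).1| |(u₁ t).2 - (u₂ t).2| ≤ r}

/-- A function is càdlàg on `[a,b]`: right-continuous with left limits. -/
def IsCadlagOn (x : ℝ → ℝ) (a b : ℝ) : Prop :=
  (∀ t ∈ Set.Ico a b, ContinuousWithinAt x (Set.Ici t) t) ∧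
    ∀ t ∈ Set.Ioc a b, Tendsto x (nhdsWithin t (Set.Iio t)) (nhds (leftLim x t))

-- helper lemmas

lemma abs_sub_le_of_mem_uIcc {u v y : ℝ} (h : y ∈ Set.uIcc u v) : |y - u| ≤ |v - u| := by
  rcases le_total u v with hc | hc
  · rw [Set.uIcc_of_le hc] at h
    rw [abs_of_nonneg (by linarith [h.1]), abs_of_nonneg (by linarith)]
    linarith [h.2]
  · rw [Set.uIcc_of_ge hc] at h
    rw [abs_of_nonpos (by linarith [h.2]), abs_of_nonpos (by linarith)]
    linarith [h.1]

lemma eq_right_of_mem_uIcc {u v y : ℝ} (h : y ∈ Set.uIcc u v) (h2 : |v - u| ≤ |y - u|) :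
    y = v := by
  rcases le_total u v with hc | hc
  · rw [Set.uIcc_of_le hc] at h
    rw [abs_of_nonneg (by linarith [h.1]), abs_of_nonneg (by linarith [h.1])] at h2
    linarith [h.2]
  · rw [Set.uIcc_of_ge hc] at h
    rw [abs_of_nonpos (by linarith [h.2]), abs_of_nonpos (by linarith [h.2])] at h2
    linarith [h.1]

lemma paramRep_mem {x : ℝ → ℝ} {a b : ℝ} {u : ℝ → ℝ × ℝ} (h : IsParamRep x a b u)
    {s : ℝ} (hs : s ∈ Set.Icc (0:ℝ) 1) : u s ∈ completedGraph x a b := by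
  rw [← h.2.1]; exact ⟨s, hs, rfl⟩

lemma paramRep_apply_one {x : ℝ → ℝ} {a b : ℝ} {u : ℝ → ℝ × ℝ} (hab : a ≤ b)
    (h : IsParamRep x a b u) : u 1 = (b, x b) := by
  have h01 : (1:ℝ) ∈ Set.Icc (0:ℝ) 1 := ⟨zero_le_one, le_refl _⟩
  have hmem := paramRep_mem h h01
  have hbx : ((b, x b) : ℝ × ℝ) ∈ completedGraph x a b :=
    ⟨⟨hab, le_refl b⟩, Set.right_mem_uIcc⟩
  rw [← h.2.1] at hbx
  obtain ⟨s, hs, hse⟩ := hbx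
  have hle := h.2.2 s 1 hs h01 hs.2
  rw [hse] at hle
  have h1b : (u 1).1 = b := by
    rcases hle with hlt | ⟨heq, _⟩
    · exact absurd hlt (not_lt.2 hmem.1.2)
    · exact heq.symm
  have h2 : (u 1).2 = x b := by
    rcases hle with hlt | ⟨heq, hle2⟩
    · exact absurd hlt (not_lt.2 hmem.1.2)
    · have := hmem.2
      rw [h1b] at this
      simp only [h1b] at hle2
      exact eq_right_of_mem_uIcc this hle2
  exact Prod.ext h1b h2

lemma paramRep_apply_zero {x : ℝ → ℝ} {b c : ℝ} {w : ℝ → ℝ × ℝ} (hbc : b ≤ c)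
    (h : IsParamRep x b c w) : w 0 = (b, x b) := by
  have h01 : (0:ℝ) ∈ Set.Icc (0:ℝ) 1 := ⟨le_refl _, zero_le_one⟩
  have hmem := paramRep_mem h h01
  have hbx : ((b, x b) : ℝ × ℝ) ∈ completedGraph x b c :=
    ⟨⟨le_refl b, hbc⟩, Set.right_mem_uIcc⟩
  rw [← h.2.1] at hbx
  obtain ⟨s, hs, hse⟩ := hbx
  have hle := h.2.2 0 s h01 hs hs.1
  rw [hse] at hle
  have h1b : (w 0).1 = b := by
    rcases hle with hlt | ⟨heq, _⟩
    · exact absurd hlt (not_lt.2 hmem.1.1)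
    · exact heq
  have h2 : (w 0).2 = x b := by
    have := hmem.2
    rw [h1b] at this
    have : (w 0).2 ∈ Set.uIcc (x b) (x b) := by
      simpa [m1Left] using this
    simpa using this
  exact Prod.ext h1b h2

lemma m1Left_eq_of_gt {x : ℝ → ℝ} {a b t : ℝ} (hab : a ≤ b) (ht : b < t) :
    m1Left x a t = m1Left x b t := by
  simp only [m1Left, if_neg (by linarith : t ≠ a), if_neg (by linarith : t ≠ b)]

lemma completedGraph_union {x : ℝ → ℝ} {a b c : ℝ} (hab : a ≤ b) (hbc : b ≤ c) :
    completedGraph x a c = completedGraph x a b ∪ completedGraph x b c := by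
  ext p
  constructor
  · rintro ⟨⟨h1, h2⟩, h3⟩
    rcases le_or_gt p.1 b with hpb | hpb
    · exact Or.inl ⟨⟨h1, hpb⟩, h3⟩
    · refine Or.inr ⟨⟨le_of_lt hpb, h2⟩, ?_⟩
      rwa [← m1Left_eq_of_gt hab hpb]
  · rintro (⟨⟨h1, h2⟩, h3⟩ | ⟨⟨h1, h2⟩, h3⟩)
    · exact ⟨⟨h1, le_trans h2 hbc⟩, h3⟩
    · refine ⟨⟨le_trans hab h1, h2⟩, ?_⟩
      rcases eq_or_lt_of_le h1 with heq | hlt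
      · have : p.2 = x p.1 := by
          have := h3
          rw [← heq] at this ⊢
          simpa [m1Left] using this
        rw [this]; exact Set.right_mem_uIcc
      · rwa [m1Left_eq_of_gt hab hlt]

lemma graphLE_congr {x : ℝ → ℝ} {a b c : ℝ} (hab : a ≤ b) {p q : ℝ × ℝ}
    (hp : p ∈ completedGraph x b c) (hq : q ∈ completedGraph x b c) :
    graphLE x a p q ↔ graphLE x b p q := by
  unfold graphLE
  refine or_congr_right (and_congr_right fun heq => ?_)
  rcases eq_or_lt_of_le hp.1.1 with hpb | hpb
  · have hp2 : p.2 = x b := by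
      have := hp.2; rw [← hpb] at this; simpa [m1Left, ← hpb] using this
    have hq2 : q.2 = x b := by
      have := hq.2; rw [heq] at hpb; rw [← hpb] at this; simpa [m1Left, ← hpb] using this
    rw [heq] at hpb
    constructor <;> intro _ <;> rw [← heq, hp2, hq2]
  · rw [m1Left_eq_of_gt hab hpb, ← heq, m1Left_eq_of_gt hab hpb]

lemma paramRep_fst_mono {x : ℝ → ℝ} {a b : ℝ} {u : ℝ → ℝ × ℝ} (hu : IsParamRep x a b u)
    {s t : ℝ} (hs : s ∈ Set.Icc (0:ℝ) 1) (ht : t ∈ Set.Icc (0:ℝ) 1) (hst : s ≤ t) :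
    (u s).1 ≤ (u t).1 := by
  rcases hu.2.2 s t hs ht hst with h | ⟨h, _⟩
  · exact h.le
  · exact h.le

lemma paramRep_restrict {x : ℝ → ℝ} {a b c : ℝ} (hab : a < b) (hbc : b < c)
    {u : ℝ → ℝ × ℝ} (hu : IsParamRep x a c u) :
    (∃ v, IsParamRep x a b v) ∧ ∃ w, IsParamRep x b c w := by
  have hac : a ≤ c := le_trans hab.le hbc.le
  have u1 : u 1 = (c, x c) := paramRep_apply_one hac hu
  have u0 : u 0 = (a, x a) := paramRep_apply_zero hac hu
  set T : Set ℝ := Set.Icc (0:ℝ) 1 ∩ (fun s => (u s).1) ⁻¹' Set.Iic b with hT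
  have hT0 : (0:ℝ) ∈ T := ⟨⟨le_refl _, zero_le_one⟩, by simp [u0, hab.le]⟩
  have hTbdd : BddAbove T := ⟨1, fun s hs => hs.1.2⟩
  have hf : ContinuousOn (fun s => (u s).1) (Set.Icc 0 1) :=
    continuous_fst.comp_continuousOn hu.1
  have hTclosed : IsClosed T :=
    hf.preimage_isClosed_of_isClosed isClosed_Icc isClosed_Iic
  set σ := sSup T with hσdef
  have hσT : σ ∈ T := hTclosed.csSup_mem ⟨0, hT0⟩ hTbdd
  have hkey : ∀ s ∈ Set.Icc (0:ℝ) 1, (u s).1 ≤ b → s ≤ σ := fun s hs hsb =>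
    le_csSup hTbdd ⟨hs, hsb⟩
  have hσb : (u σ).1 = b := by
    have hsub : Set.Icc ((u σ).1) ((u 1).1) ⊆ (fun s => (u s).1) '' Set.Icc σ 1 :=
      intermediate_value_Icc hσT.1.2 (hf.mono (Set.Icc_subset_Icc hσT.1.1 le_rfl))
    have hbmem : b ∈ Set.Icc ((u σ).1) ((u 1).1) := ⟨hσT.2, by rw [u1]; exact hbc.le⟩
    obtain ⟨s, hs, hfs⟩ := hsub hbmem
    have hsT : s ∈ T := ⟨⟨le_trans hσT.1.1 hs.1, hs.2⟩, by simp [hfs]⟩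
    have : s = σ := le_antisymm (le_csSup hTbdd hsT) hs.1
    rw [← this]; exact hfs
  have huσ : u σ = (b, x b) := by
    have hmemσ := paramRep_mem hu hσT.1
    have hbx : ((b, x b) : ℝ × ℝ) ∈ completedGraph x a c :=
      ⟨⟨hab.le, hbc.le⟩, Set.right_mem_uIcc⟩
    rw [← hu.2.1] at hbx
    obtain ⟨s₀, hs₀, hse⟩ := hbx
    have hs₀σ : s₀ ≤ σ := hkey s₀ hs₀ (by rw [hse])
    have hle := hu.2.2 s₀ σ hs₀ hσT.1 hs₀σ
    rw [hse] at hle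
    rcases hle with hlt | ⟨_, hle2⟩
    · rw [hσb] at hlt; exact absurd hlt (lt_irrefl b)
    · refine Prod.ext hσb ?_
      have h2 : (u σ).2 ∈ Set.uIcc (m1Left x a b) (x b) := by
        have := hmemσ.2; rwa [hσb] at this
      rw [hσb] at hle2
      exact eq_right_of_mem_uIcc h2 hle2
  have hσpos : 0 < σ := by
    rcases eq_or_lt_of_le hσT.1.1 with h | h
    · exfalso; rw [← h] at hσb; rw [u0] at hσb; exact absurd hσb.symm (ne_of_gt hab)
    · exact h
  have hσlt1 : σ < 1 := by
    rcases eq_or_lt_of_le hσT.1.2 with h | h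
    · exfalso; rw [h] at hσb; rw [u1] at hσb; exact absurd hσb (ne_of_gt hbc)
    · exact h
  have hsub01 : Set.Icc (0:ℝ) σ ⊆ Set.Icc 0 1 := Set.Icc_subset_Icc le_rfl hσT.1.2
  have hsubσ1 : Set.Icc σ 1 ⊆ Set.Icc 0 1 := Set.Icc_subset_Icc hσT.1.1 le_rfl
  -- image over [0, σ]
  have imgAB : u '' Set.Icc 0 σ = completedGraph x a b := by
    ext p
    constructor
    · rintro ⟨s, hs, rfl⟩
      have hs01 : s ∈ Set.Icc (0:ℝ) 1 := hsub01 hs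
      have hmem := paramRep_mem hu hs01
      have : (u s).1 ≤ b := by
        have := paramRep_fst_mono hu hs01 hσT.1 hs.2
        rwa [hσb] at this
      exact ⟨⟨hmem.1.1, this⟩, hmem.2⟩
    · intro hp
      have hpac : p ∈ completedGraph x a c := ⟨⟨hp.1.1, le_trans hp.1.2 hbc.le⟩, hp.2⟩
      rw [← hu.2.1] at hpac
      obtain ⟨s, hs, rfl⟩ := hpac
      exact ⟨s, ⟨hs.1, hkey s hs hp.1.2⟩, rfl⟩
  -- image over [σ, 1]
  have imgBC : u '' Set.Icc σ 1 = completedGraph x b c := by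
    ext p
    constructor
    · rintro ⟨s, hs, rfl⟩
      have hs01 : s ∈ Set.Icc (0:ℝ) 1 := hsubσ1 hs
      have hmem := paramRep_mem hu hs01
      have hge : b ≤ (u s).1 := by
        have := paramRep_fst_mono hu hσT.1 hs01 hs.1
        rwa [hσb] at this
      rcases eq_or_lt_of_le hge with heq | hlt
      · have hsσ : s = σ := le_antisymm (hkey s hs01 heq.ge) hs.1
        rw [hsσ, huσ]
        exact ⟨⟨le_refl b, hbc.le⟩, by simp [m1Left]⟩
      · exact ⟨⟨hlt.le, hmem.1.2⟩, by rw [← m1Left_eq_of_gt hab.le hlt]; exact hmem.2⟩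
    · intro hp
      rcases eq_or_lt_of_le hp.1.1 with heq | hlt
      · have hp2 : p.2 = x b := by
          have := hp.2; rw [← heq] at this; simpa [m1Left, ← heq] using this
        have : p = (b, x b) := Prod.ext heq.symm hp2
        rw [this, ← huσ]
        exact ⟨σ, ⟨le_refl σ, hσT.1.2⟩, rfl⟩
      · have hpac : p ∈ completedGraph x a c := by
          refine ⟨⟨le_trans hab.le hp.1.1, hp.1.2⟩, ?_⟩
          rw [m1Left_eq_of_gt hab.le hlt]; exact hp.2
        rw [← hu.2.1] at hpac
        obtain ⟨s, hs, rfl⟩ := hpac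
        have hσs : σ ≤ s := by
          by_contra hcon
          push_neg at hcon
          have := paramRep_fst_mono hu hs hσT.1 hcon.le
          rw [hσb] at this
          exact absurd hlt (not_lt.2 this)
        exact ⟨s, ⟨hσs, hs.2⟩, rfl⟩
  constructor
  · -- v on [a, b]
    refine ⟨fun t => u (σ * t), ?_, ?_, ?_⟩
    · have hmaps : ∀ t ∈ Set.Icc (0:ℝ) 1, σ * t ∈ Set.Icc (0:ℝ) 1 := fun t ht =>
        hsub01 ⟨mul_nonneg hσpos.le ht.1, mul_le_of_le_one_right hσpos.le ht.2⟩
      exact hu.1.comp ((continuous_const.mul continuous_id).continuousOn) hmaps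
    · have hinner : (fun t => σ * t) '' Set.Icc (0:ℝ) 1 = Set.Icc 0 σ := by
        ext y
        constructor
        · rintro ⟨t, ht, rfl⟩
          exact ⟨mul_nonneg hσpos.le ht.1, mul_le_of_le_one_right hσpos.le ht.2⟩
        · intro hy
          exact ⟨y / σ, ⟨div_nonneg hy.1 hσpos.le, (div_le_one hσpos).2 hy.2⟩,
            by field_simp⟩
      rw [show (fun t => u (σ * t)) = u ∘ (fun t => σ * t) from rfl, Set.image_comp,
        hinner, imgAB]
    · intro s t hs ht hst
      exact hu.2.2 (σ * s) (σ * t)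
        (hsub01 ⟨mul_nonneg hσpos.le hs.1, mul_le_of_le_one_right hσpos.le hs.2⟩)
        (hsub01 ⟨mul_nonneg hσpos.le ht.1, mul_le_of_le_one_right hσpos.le ht.2⟩)
        (mul_le_mul_of_nonneg_left hst hσpos.le)
  · -- w on [b, c]
    have h1σ : 0 < 1 - σ := by linarith
    have hmaps : ∀ t ∈ Set.Icc (0:ℝ) 1, σ + t * (1 - σ) ∈ Set.Icc σ 1 := by
      intro t ht
      constructor
      · nlinarith [ht.1]
      · nlinarith [ht.2]
    refine ⟨fun t => u (σ + t * (1 - σ)), ?_, ?_, ?_⟩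
    · exact hu.1.comp ((continuous_const.add (continuous_id.mul continuous_const)).continuousOn)
        (fun t ht => hsubσ1 (hmaps t ht))
    · have hinner : (fun t => σ + t * (1 - σ)) '' Set.Icc (0:ℝ) 1 = Set.Icc σ 1 := by
        ext y
        constructor
        · rintro ⟨t, ht, rfl⟩
          exact hmaps t ht
        · intro hy
          refine ⟨(y - σ) / (1 - σ), ⟨div_nonneg (by linarith [hy.1]) h1σ.le,
            (div_le_one h1σ).2 (by linarith [hy.2])⟩, by field_simp; ring⟩
      rw [show (fun t => u (σ + t * (1 - σ))) = u ∘ (fun t => σ + t * (1 - σ)) from rfl,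
        Set.image_comp, hinner, imgBC]
    · intro s t hs ht hst
      have hms := hmaps s hs
      have hmt := hmaps t ht
      have hmemp : u (σ + s * (1 - σ)) ∈ completedGraph x b c := by
        rw [← imgBC]; exact ⟨_, hms, rfl⟩
      have hmemq : u (σ + t * (1 - σ)) ∈ completedGraph x b c := by
        rw [← imgBC]; exact ⟨_, hmt, rfl⟩
      refine (graphLE_congr hab.le hmemp hmemq).1 ?_
      exact hu.2.2 _ _ (hsubσ1 hms) (hsubσ1 hmt) (by nlinarith)

def glueFn (v w : ℝ → ℝ × ℝ) : ℝ → ℝ × ℝ := fun t =>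
  if t ≤ 1/2 then v (max (min (2*t) 1) 0) else w (max (min (2*t-1) 1) 0)

lemma glueFn_left {v w : ℝ → ℝ × ℝ} {t : ℝ} (h0 : 0 ≤ t) (h : t ≤ 1/2) :
    glueFn v w t = v (2*t) := by
  rw [glueFn, if_pos h, min_eq_left (by linarith), max_eq_left (by linarith)]

lemma glueFn_right {v w : ℝ → ℝ × ℝ} {t : ℝ} (h : ¬ t ≤ 1/2) (h1 : t ≤ 1) :
    glueFn v w t = w (2*t-1) := by
  push_neg at h
  rw [glueFn, if_neg (by linarith), min_eq_left (by linarith), max_eq_left (by linarith)]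

lemma clamp_mem (y : ℝ) : max (min y 1) 0 ∈ Set.Icc (0:ℝ) 1 :=
  ⟨le_max_right _ _, max_le (min_le_right y 1) zero_le_one⟩

lemma glue_isParamRep {x : ℝ → ℝ} {a b c : ℝ} (hab : a < b) (hbc : b < c)
    {v w : ℝ → ℝ × ℝ} (hv : IsParamRep x a b v) (hw : IsParamRep x b c w) :
    IsParamRep x a c (glueFn v w) := by
  have hv1 : v 1 = (b, x b) := paramRep_apply_one hab.le hv
  have hw0 : w 0 = (b, x b) := paramRep_apply_zero hbc.le hw
  refine ⟨?_, ?_, ?_⟩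
  · -- continuity
    have hcl : Continuous (fun t : ℝ => max (min (2*t) 1) 0) :=
      (((continuous_const.mul continuous_id).min continuous_const).max continuous_const)
    have hcl2 : Continuous (fun t : ℝ => max (min (2*t-1) 1) 0) :=
      ((((continuous_const.mul continuous_id).sub continuous_const).min
        continuous_const).max continuous_const)
    have hf' : Continuous (fun t : ℝ => v (max (min (2*t) 1) 0)) :=
      hv.1.comp_continuous hcl (fun t => clamp_mem _)
    have hg' : Continuous (fun t : ℝ => w (max (min (2*t-1) 1) 0)) :=
      hw.1.comp_continuous hcl2 (fun t => clamp_mem _)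
    have : Continuous (glueFn v w) := by
      unfold glueFn
      refine continuous_if_le continuous_id continuous_const hf'.continuousOn
        hg'.continuousOn ?_
      intro t ht
      try simp only [id_eq] at ht
      subst ht
      norm_num [hv1, hw0]
    exact this.continuousOn
  · -- image
    rw [completedGraph_union (x := x) hab.le hbc.le]
    ext p
    constructor
    · rintro ⟨t, ht, rfl⟩
      by_cases h : t ≤ 1/2
      · rw [glueFn_left ht.1 h]
        left
        rw [← hv.2.1]
        exact ⟨2*t, ⟨by linarith [ht.1], by linarith⟩, rfl⟩
      · rw [glueFn_right h ht.2]
        right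
        rw [← hw.2.1]
        push_neg at h
        exact ⟨2*t-1, ⟨by linarith, by linarith [ht.2]⟩, rfl⟩
    · rintro (hp | hp)
      · rw [← hv.2.1] at hp
        obtain ⟨s, hs, rfl⟩ := hp
        refine ⟨s/2, ⟨by linarith [hs.1], by linarith [hs.2]⟩, ?_⟩
        rw [glueFn_left (by linarith [hs.1]) (by linarith [hs.2])]
        norm_num [mul_div_cancel₀]
      · rw [← hw.2.1] at hp
        obtain ⟨s, hs, rfl⟩ := hp
        rcases eq_or_lt_of_le hs.1 with h0 | h0
        · refine ⟨1/2, ⟨by norm_num, by norm_num⟩, ?_⟩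
          rw [glueFn_left (by norm_num) (le_refl _)]
          norm_num [hv1, ← h0, hw0]
        · refine ⟨(s+1)/2, ⟨by linarith, by linarith [hs.2]⟩, ?_⟩
          rw [glueFn_right (by push_neg; linarith) (by linarith [hs.2])]
          congr 1
          ring
  · -- monotonicity
    intro s t hs ht hst
    by_cases ht2 : t ≤ 1/2
    · have hs2 : s ≤ 1/2 := le_trans hst ht2
      rw [glueFn_left hs.1 hs2, glueFn_left ht.1 ht2]
      exact hv.2.2 (2*s) (2*t) ⟨by linarith [hs.1], by linarith⟩
        ⟨by linarith [ht.1], by linarith⟩ (by linarith)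
    · by_cases hs2 : s ≤ 1/2
      · -- cross case
        rw [glueFn_left hs.1 hs2, glueFn_right ht2 ht.2]
        push_neg at ht2
        have hpv : v (2*s) ∈ completedGraph x a b :=
          paramRep_mem hv ⟨by linarith [hs.1], by linarith⟩
        have hpw : w (2*t-1) ∈ completedGraph x b c :=
          paramRep_mem hw ⟨by linarith, by linarith [ht.2]⟩
        have h1 : (v (2*s)).1 ≤ b := hpv.1.2
        have h2 : b ≤ (w (2*t-1)).1 := hpw.1.1
        rcases lt_or_eq_of_le (le_trans h1 h2) with hlt | heq
        · exact Or.inl hlt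
        · refine Or.inr ⟨heq, ?_⟩
          have hfb : (v (2*s)).1 = b := le_antisymm h1 (heq ▸ h2)
          have hwb : (w (2*t-1)).1 = b := le_antisymm (heq ▸ h1) h2
          have hw2 : (w (2*t-1)).2 = x b := by
            have := hpw.2
            rw [hwb] at this
            simpa [m1Left] using this
          rw [hw2, ← heq, hfb]
          have : (v (2*s)).2 ∈ Set.uIcc (m1Left x a b) (x b) := by
            have := hpv.2; rwa [hfb] at this
          exact abs_sub_le_of_mem_uIcc this
      · -- both right
        push_neg at hs2
        rw [glueFn_right (not_le.2 hs2) hs.2, glueFn_right ht2 ht.2]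
        push_neg at ht2
        have hmemp : w (2*s-1) ∈ completedGraph x b c :=
          paramRep_mem hw ⟨by linarith, by linarith [hs.2]⟩
        have hmemq : w (2*t-1) ∈ completedGraph x b c :=
          paramRep_mem hw ⟨by linarith, by linarith [ht.2]⟩
        refine (graphLE_congr hab.le hmemp hmemq).2 ?_
        exact hw.2.2 (2*s-1) (2*t-1) ⟨by linarith, by linarith [hs.2]⟩
          ⟨by linarith, by linarith [ht.2]⟩ (by linarith)

lemma m1Dist_set_nonneg {x₁ x₂ : ℝ → ℝ} {a b r : ℝ}
    (hr : r ∈ {r : ℝ | ∃ u₁ u₂ : ℝ → ℝ × ℝ, IsParamRep x₁ a b u₁ ∧ IsParamRep x₂ a b u₂ ∧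
      ∀ t ∈ Set.Icc (0:ℝ) 1,
        max |(u₁ t).1 - (u₂ t).1| |(u₁ t).2 - (u₂ t).2| ≤ r}) : 0 ≤ r := by
  obtain ⟨u₁, u₂, _, _, hb⟩ := hr
  have := hb 0 ⟨le_refl _, zero_le_one⟩
  exact le_trans (le_trans (abs_nonneg _) (le_max_left _ _)) this

lemma m1Dist_nonneg (x₁ x₂ : ℝ → ℝ) (a b : ℝ) : 0 ≤ m1Dist x₁ x₂ a b :=
  Real.sInf_nonneg (fun _ hr => m1Dist_set_nonneg hr)

lemma exists_mem_m1Dist_set {x₁ x₂ : ℝ → ℝ} {a b : ℝ} {u₁ u₂ : ℝ → ℝ × ℝ}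
    (h₁ : IsParamRep x₁ a b u₁) (h₂ : IsParamRep x₂ a b u₂) :
    ∃ r, r ∈ {r : ℝ | ∃ u₁ u₂ : ℝ → ℝ × ℝ, IsParamRep x₁ a b u₁ ∧ IsParamRep x₂ a b u₂ ∧
      ∀ t ∈ Set.Icc (0:ℝ) 1,
        max |(u₁ t).1 - (u₂ t).1| |(u₁ t).2 - (u₂ t).2| ≤ r} := by
  have hc : ContinuousOn
      (fun t => max |(u₁ t).1 - (u₂ t).1| |(u₁ t).2 - (u₂ t).2|) (Set.Icc 0 1) :=
    (((continuous_fst.comp_continuousOn h₁.1).sub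
      (continuous_fst.comp_continuousOn h₂.1)).abs).sup
      (((continuous_snd.comp_continuousOn h₁.1).sub
        (continuous_snd.comp_continuousOn h₂.1)).abs)
  obtain ⟨t₀, ht₀, hmax⟩ := isCompact_Icc.exists_isMaxOn
    (Set.nonempty_Icc.2 zero_le_one) hc
  exact ⟨_, u₁, u₂, h₁, h₂, fun t ht => hmax ht⟩


/-- For càdlàg functions `x₁, x₂` on `[a,c]` and `a < b < c`, the
`M₁` distance satisfies
`d_{M₁}(x₁,x₂,[a,c]) ≤ max(d_{M₁}(x₁,x₂,[a,b]), d_{M₁}(x₁,x₂,[b,c]))`. -/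
theorem m1Dist_glue (x₁ x₂ : ℝ → ℝ) (a b c : ℝ) (hab : a < b) (hbc : b < c)
    (h₁ : IsCadlagOn x₁ a c) (h₂ : IsCadlagOn x₂ a c) :
    m1Dist x₁ x₂ a c ≤ max (m1Dist x₁ x₂ a b) (m1Dist x₁ x₂ b c) := by
  set Sac := {r : ℝ | ∃ u₁ u₂ : ℝ → ℝ × ℝ, IsParamRep x₁ a c u₁ ∧ IsParamRep x₂ a c u₂ ∧
    ∀ t ∈ Set.Icc (0:ℝ) 1,
      max |(u₁ t).1 - (u₂ t).1| |(u₁ t).2 - (u₂ t).2| ≤ r} with hSac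
  set Sab := {r : ℝ | ∃ u₁ u₂ : ℝ → ℝ × ℝ, IsParamRep x₁ a b u₁ ∧ IsParamRep x₂ a b u₂ ∧
    ∀ t ∈ Set.Icc (0:ℝ) 1,
      max |(u₁ t).1 - (u₂ t).1| |(u₁ t).2 - (u₂ t).2| ≤ r} with hSab
  set Sbc := {r : ℝ | ∃ u₁ u₂ : ℝ → ℝ × ℝ, IsParamRep x₁ b c u₁ ∧ IsParamRep x₂ b c u₂ ∧
    ∀ t ∈ Set.Icc (0:ℝ) 1,
      max |(u₁ t).1 - (u₂ t).1| |(u₁ t).2 - (u₂ t).2| ≤ r} with hSbc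
  rcases Set.eq_empty_or_nonempty Sac with hemp | hne
  · have : m1Dist x₁ x₂ a c = 0 := by
      rw [m1Dist, ← hSac, hemp, Real.sInf_empty]
    rw [this]
    exact le_max_of_le_left (m1Dist_nonneg x₁ x₂ a b)
  · obtain ⟨r₀, hr₀⟩ := hne
    obtain ⟨U₁, U₂, hU₁, hU₂, _⟩ := hr₀
    obtain ⟨⟨V₁, hV₁⟩, ⟨W₁, hW₁⟩⟩ := paramRep_restrict hab hbc hU₁
    obtain ⟨⟨V₂, hV₂⟩, ⟨W₂, hW₂⟩⟩ := paramRep_restrict hab hbc hU₂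
    have hSabne : Sab.Nonempty := exists_mem_m1Dist_set hV₁ hV₂
    have hSbcne : Sbc.Nonempty := exists_mem_m1Dist_set hW₁ hW₂
    have hbdd : BddBelow Sac := ⟨0, fun r hr => m1Dist_set_nonneg hr⟩
    refine le_of_forall_pos_le_add (fun ε hε => ?_)
    have hlt1 : sInf Sab < m1Dist x₁ x₂ a b + ε := by
      rw [m1Dist, ← hSab]; linarith
    have hlt2 : sInf Sbc < m1Dist x₁ x₂ b c + ε := by
      rw [m1Dist, ← hSbc]; linarith
    obtain ⟨r₁, hr₁, hr₁lt⟩ := exists_lt_of_csInf_lt hSabne hlt1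
    obtain ⟨r₂, hr₂, hr₂lt⟩ := exists_lt_of_csInf_lt hSbcne hlt2
    obtain ⟨v₁, v₂, hv₁, hv₂, hbd1⟩ := hr₁
    obtain ⟨w₁, w₂, hw₁, hw₂, hbd2⟩ := hr₂
    have hzmem : max r₁ r₂ ∈ Sac := by
      refine ⟨glueFn v₁ w₁, glueFn v₂ w₂, glue_isParamRep hab hbc hv₁ hw₁,
        glue_isParamRep hab hbc hv₂ hw₂, ?_⟩
      intro t ht
      by_cases h : t ≤ 1/2
      · rw [glueFn_left ht.1 h, glueFn_left ht.1 h]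
        exact le_trans (hbd1 (2*t) ⟨by linarith [ht.1], by linarith⟩) (le_max_left _ _)
      · rw [glueFn_right h ht.2, glueFn_right h ht.2]
        push_neg at h
        exact le_trans (hbd2 (2*t-1) ⟨by linarith, by linarith [ht.2]⟩) (le_max_right _ _)
    have h1 : m1Dist x₁ x₂ a c ≤ max r₁ r₂ := by
      rw [m1Dist, ← hSac]
      exact csInf_le hbdd hzmem
    refine le_trans h1 ?_
    rw [← max_add_add_right]
    exact max_le_max hr₁lt.le hr₂lt.le
end
end
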